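/- arXiv:1901.07991 — 3 statements merged into one kernel-verified Lean document; each statement's English description precedes it below -/
import Mathlib

section
/- Let X be a d×d Hermitian matrix with Tr(X) = 1 and spectral decomposition X = Σ_{i=1}^d λ_i |g_i⟩⟨g_i| with orthonormal eigenvectors g_i. Then there exists a real number x₀ such that Σ_{i=1}^d max(λ_i − x₀, 0) = 1, and the matrix Σ_{i=1}^d max(λ_i − x₀, 0) |g_i⟩⟨g_i| is the unique minimizer of the Frobenius distance ‖X − τ‖₂ over all density matrices τ on ℂ^d. -/
open MeasureTheory ProbabilityTheory Matrix
open scoped ComplexOrder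

/-- The Borel (= product) σ-algebra on `d × d` complex matrices. -/
noncomputable instance matrixMeasurableSpace (d : ℕ) : MeasurableSpace (Matrix (Fin d) (Fin d) ℂ) :=
  MeasurableSpace.pi

/-- A density matrix: positive semidefinite with trace one. -/
def IsDensityMatrix {d : ℕ} (ρ : Matrix (Fin d) (Fin d) ℂ) : Prop :=
  ρ.PosSemidef ∧ ρ.trace = 1

/-- The rank-one projection `U E_{jj} U*`. -/
noncomputable def covProj (d : ℕ) (j : Fin d) (U : Matrix.unitaryGroup (Fin d) ℂ) :
    Matrix (Fin d) (Fin d) ℂ :=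
  (U : Matrix (Fin d) (Fin d) ℂ) * Matrix.single j j 1 *
    star (U : Matrix (Fin d) (Fin d) ℂ)

/-- The outcome law `μ_ρ` of the covariant measurement on the state `ρ`, built from the Haar
probability measure `μ` on the unitary group: the distribution of `U E_{JJ} U*` where `U ~ μ`
and, conditionally on `U`, `J = j` has probability `⟨e_j, U* ρ U e_j⟩`. -/
noncomputable def covariantLaw (d : ℕ) (μ : Measure (Matrix.unitaryGroup (Fin d) ℂ))
    (ρ : Matrix (Fin d) (Fin d) ℂ) : Measure (Matrix (Fin d) (Fin d) ℂ) :=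
  Measure.sum fun j : Fin d =>
    Measure.map (covProj d j)
      (μ.withDensity fun U =>
        ENNReal.ofReal
          ((star (U : Matrix (Fin d) (Fin d) ℂ) * ρ * (U : Matrix (Fin d) (Fin d) ℂ)) j j).re)

/-- The least squares estimator `ρ̂_LS = (1/N) Σ_i ((d+1) P_i - I)`. -/
noncomputable def lsEst {Ω : Type*} (d N : ℕ) (P : Fin N → Ω → Matrix (Fin d) (Fin d) ℂ)
    (ω : Ω) : Matrix (Fin d) (Fin d) ℂ :=
  (N : ℂ)⁻¹ • ∑ i, ((d + 1 : ℂ) • P i ω - 1)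

/-- Squared Frobenius norm `‖A‖₂² = Tr(A* A)`. -/
noncomputable def frobSq {d : ℕ} (A : Matrix (Fin d) (Fin d) ℂ) : ℝ :=
  (Matrix.trace (Aᴴ * A)).re

/-- Frobenius norm `‖A‖₂ = (Tr(A* A))^{1/2}`. -/
noncomputable def frobNorm {d : ℕ} (A : Matrix (Fin d) (Fin d) ℂ) : ℝ :=
  Real.sqrt (Matrix.trace (Aᴴ * A)).re

/-- Operator norm (largest singular value) of a matrix, as the `ℓ² → ℓ²` operator norm. -/
noncomputable def opNorm {d : ℕ} (A : Matrix (Fin d) (Fin d) ℂ) : ℝ :=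
  ‖LinearMap.toContinuousLinearMap (Matrix.toEuclideanLin A)‖

/-- Trace norm `‖A‖₁ = Tr|A|`: the sum of the singular values of `A`. -/
noncomputable def traceNorm {d : ℕ} (A : Matrix (Fin d) (Fin d) ℂ) : ℝ :=
  ∑ i, Real.sqrt ((Matrix.posSemidef_conjTranspose_mul_self A).1.eigenvalues i)

/-- The rank-`r` density matrix `ρ_r = (1/r) Σ_{i=1}^r E_{ii}`. -/
noncomputable def rhoR (d r : ℕ) : Matrix (Fin d) (Fin d) ℂ :=
  (r : ℂ)⁻¹ • ∑ i : Fin d, if (i : ℕ) < r then Matrix.single i i 1 else 0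

private lemma fpet_frobSq_eq_sum {d : ℕ} (A : Matrix (Fin d) (Fin d) ℂ) :
    frobSq A = ∑ j, ∑ k, Complex.normSq (A k j) := by
  simp [frobSq, Matrix.trace, Matrix.mul_apply, Matrix.conjTranspose_apply, Matrix.diag,
    Complex.normSq_apply, Complex.mul_re]

private lemma fpet_frobSq_nonneg {d : ℕ} (A : Matrix (Fin d) (Fin d) ℂ) : 0 ≤ frobSq A := by
  rw [fpet_frobSq_eq_sum]
  exact Finset.sum_nonneg fun j _ => Finset.sum_nonneg fun k _ => Complex.normSq_nonneg _

private lemma fpet_frobSq_eq_zero {d : ℕ} (A : Matrix (Fin d) (Fin d) ℂ)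
    (h : frobSq A = 0) : A = 0 := by
  rw [fpet_frobSq_eq_sum] at h
  ext k j
  have h1 := (Finset.sum_eq_zero_iff_of_nonneg fun j _ =>
    Finset.sum_nonneg fun k _ => Complex.normSq_nonneg (A k j)).mp h j (Finset.mem_univ j)
  have h2 := (Finset.sum_eq_zero_iff_of_nonneg fun k _ =>
    Complex.normSq_nonneg (A k j)).mp h1 k (Finset.mem_univ k)
  simpa using Complex.normSq_eq_zero.mp h2

private lemma fpet_expand {d : ℕ} (A B : Matrix (Fin d) (Fin d) ℂ) :
    frobSq (A + B) = frobSq A + frobSq B + 2 * (Matrix.trace (Aᴴ * B)).re := by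
  have h : (A + B)ᴴ * (A + B) = Aᴴ*A + (Aᴴ*B + (Bᴴ*A + Bᴴ*B)) := by
    simp only [Matrix.conjTranspose_add, Matrix.add_mul, Matrix.mul_add]
    abel
  have h2 : (Matrix.trace (Bᴴ * A)).re = (Matrix.trace (Aᴴ * B)).re := by
    have e : Bᴴ * A = (Aᴴ * B)ᴴ := by simp
    rw [e, Matrix.trace_conjTranspose]
    exact Complex.conj_re _
  rw [frobSq, h]
  simp only [Matrix.trace_add, Complex.add_re, frobSq]
  rw [h2]; ring

private lemma fpet_complete {d : ℕ} (g : Fin d → Fin d → ℂ)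
    (horth : ∀ i j, (∑ a, star (g i a) * g j a) = if i = j then 1 else 0) :
    (∑ i, Matrix.vecMulVec (g i) (star (g i))) = 1 := by
  classical
  set G : Matrix (Fin d) (Fin d) ℂ := Matrix.of g with hG
  have hGG : G * Gᴴ = 1 := by
    ext i j
    have := congrArg star (horth i j)
    simp only [star_sum, star_mul', star_star, apply_ite star, star_one, star_zero] at this
    simpa [Matrix.mul_apply, Matrix.conjTranspose_apply, hG, Matrix.one_apply] using this
  have hGG' : Gᴴ * G = 1 := mul_eq_one_comm.mp hGG
  ext a b
  have h2 := congrFun (congrFun hGG' b) a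
  simp only [Matrix.mul_apply, Matrix.conjTranspose_apply, hG, Matrix.of_apply] at h2
  simp only [Matrix.sum_apply, Matrix.vecMulVec_apply, Pi.star_apply]
  rw [show (∑ i, g i a * star (g i b)) = ∑ i, star (g i b) * g i a from
    Finset.sum_congr rfl fun i _ => mul_comm _ _, h2]
  simp [Matrix.one_apply, eq_comm]

/-- Eigenvalue-truncation description of the Frobenius projection onto density
matrices: if `X` is Hermitian with trace one and spectral decomposition
`X = Σ λᵢ |gᵢ⟩⟨gᵢ|`, then there is `x₀ ∈ ℝ` with `Σ max(λᵢ − x₀, 0) = 1`, and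
`M = Σ max(λᵢ − x₀, 0) |gᵢ⟩⟨gᵢ|` is the unique Frobenius-distance minimizer among density
matrices. -/
theorem frobenius_projection_eigenvalue_truncation
    (d : ℕ) (X : Matrix (Fin d) (Fin d) ℂ) (hX : X.IsHermitian) (htr : X.trace = 1)
    (lam : Fin d → ℝ) (g : Fin d → Fin d → ℂ)
    (horth : ∀ i j, (∑ a, star (g i a) * g j a) = if i = j then 1 else 0)
    (hdecomp : X = ∑ i, lam i • Matrix.vecMulVec (g i) (star (g i))) :
    ∃ x₀ : ℝ, ∃ M : Matrix (Fin d) (Fin d) ℂ,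
      M = ∑ i, max (lam i - x₀) 0 • Matrix.vecMulVec (g i) (star (g i)) ∧
      (∑ i, max (lam i - x₀) 0) = 1 ∧
      IsDensityMatrix M ∧
      ∀ τ : Matrix (Fin d) (Fin d) ℂ, IsDensityMatrix τ →
        frobNorm (X - M) ≤ frobNorm (X - τ) ∧
        (frobNorm (X - τ) ≤ frobNorm (X - M) → τ = M) := by
  classical
  set P : Fin d → Matrix (Fin d) (Fin d) ℂ := fun i => Matrix.vecMulVec (g i) (star (g i))
    with hPdef
  -- trace of the projections
  have hPtr : ∀ i, (P i).trace = 1 := by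
    intro i
    have h := horth i i
    simp only [if_pos rfl] at h
    calc (P i).trace = ∑ a, g i a * star (g i a) := by
          simp [hPdef, Matrix.trace, Matrix.diag, Matrix.vecMulVec_apply]
      _ = ∑ a, star (g i a) * g i a := Finset.sum_congr rfl fun a _ => mul_comm _ _
      _ = 1 := h
  -- products of projections
  have hPP : ∀ i j, P i * P j = if i = j then P i else 0 := by
    intro i j
    have h := horth i j
    ext a b
    simp only [hPdef, Matrix.mul_apply, Matrix.vecMulVec_apply, Pi.star_apply]
    calc (∑ c, g i a * star (g i c) * (g j c * star (g j b)))
        = (g i a * star (g j b)) * ∑ c, star (g i c) * g j c := by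
          rw [Finset.mul_sum]
          exact Finset.sum_congr rfl fun c _ => by ring
      _ = (g i a * star (g j b)) * (if i = j then 1 else 0) := by rw [h]
      _ = (if i = j then P i else 0) a b := by
          by_cases hij : i = j
          · subst hij; simp [hPdef, Matrix.vecMulVec_apply]
          · simp [hij]
  -- ∑ lam = 1
  have hlamC : ∑ i, (lam i : ℂ) = 1 := by
    calc ∑ i, (lam i : ℂ) = X.trace := by
          rw [hdecomp, Matrix.trace_sum]
          exact Finset.sum_congr rfl fun i _ => by
            rw [Matrix.trace_smul, hPtr i, Complex.real_smul, mul_one]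
      _ = 1 := htr
  have hlam : ∑ i, lam i = 1 := by
    rw [← Complex.ofReal_sum] at hlamC
    exact_mod_cast hlamC
  -- d ≠ 0
  rcases Nat.eq_zero_or_pos d with h0 | hd
  · subst h0
    simp at hlam
  haveI : Nonempty (Fin d) := Fin.pos_iff_nonempty.mp hd
  have hne : (Finset.univ : Finset (Fin d)).Nonempty := Finset.univ_nonempty
  -- existence of x₀ by IVT
  set a : ℝ := min 0 (Finset.univ.inf' hne lam) with ha
  set b : ℝ := max a (Finset.univ.sup' hne lam) with hb
  have hab : a ≤ b := le_max_left _ _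
  have hcont : Continuous fun x : ℝ => ∑ i, max (lam i - x) 0 :=
    continuous_finset_sum _ fun i _ =>
      (continuous_const.sub continuous_id).max continuous_const
  have hfb : (∑ i, max (lam i - b) 0) = 0 := by
    apply Finset.sum_eq_zero; intro i _
    have hib : lam i ≤ b :=
      le_trans (Finset.le_sup' lam (Finset.mem_univ i)) (le_max_right _ _)
    exact max_eq_right (sub_nonpos.mpr hib)
  have hfa : 1 ≤ ∑ i, max (lam i - a) 0 := by
    have hai : ∀ i, a ≤ lam i := fun i =>
      le_trans (min_le_right _ _) (Finset.inf'_le lam (Finset.mem_univ i))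
    have e : ∑ i, max (lam i - a) 0 = ∑ i, (lam i - a) :=
      Finset.sum_congr rfl fun i _ => max_eq_left (sub_nonneg.mpr (hai i))
    rw [e, Finset.sum_sub_distrib, hlam, Finset.sum_const, Finset.card_univ,
      Fintype.card_fin, nsmul_eq_mul]
    have ha0 : a ≤ 0 := min_le_left _ _
    nlinarith [Nat.cast_nonneg (α := ℝ) d]
  obtain ⟨x₀, -, hx₀⟩ := intermediate_value_Icc' hab hcont.continuousOn
    (Set.mem_Icc.mpr ⟨by rw [hfb]; norm_num, hfa⟩)
  set μ : Fin d → ℝ := fun i => max (lam i - x₀) 0 with hμdef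
  have hμ0 : ∀ i, 0 ≤ μ i := fun i => le_max_right _ _
  have hsumμ : ∑ i, μ i = 1 := hx₀
  set M : Matrix (Fin d) (Fin d) ℂ := ∑ i, μ i • P i with hMdef
  -- M is Hermitian
  have hMherm : Mᴴ = M := by
    ext c e
    simp only [hMdef, hPdef, Matrix.conjTranspose_apply, Matrix.sum_apply, Matrix.smul_apply,
      Matrix.vecMulVec_apply, Pi.star_apply, star_sum, star_smul, star_mul', star_star,
      star_trivial]
    exact Finset.sum_congr rfl fun i _ => by rw [mul_comm]
  -- M is PSD via B = ∑ √μ i • P i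
  have hPherm : ∀ i, (P i)ᴴ = P i := by
    intro i
    ext c e
    simp only [hPdef, Matrix.conjTranspose_apply, Matrix.vecMulVec_apply, Pi.star_apply,
      star_mul', star_star]
    exact mul_comm _ _
  set B : Matrix (Fin d) (Fin d) ℂ := ∑ i, Real.sqrt (μ i) • P i with hBdef
  have hBherm : Bᴴ = B := by
    rw [hBdef, Matrix.conjTranspose_sum]
    exact Finset.sum_congr rfl fun i _ => by
      rw [Matrix.conjTranspose_smul, star_trivial, hPherm]
  have hBB : Bᴴ * B = M := by
    rw [hBherm, hBdef, Finset.sum_mul]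
    rw [hMdef]
    refine Finset.sum_congr rfl fun i _ => ?_
    have key : ∀ j ∈ Finset.univ, Real.sqrt (μ i) • (P i * Real.sqrt (μ j) • P j)
        = if i = j then (Real.sqrt (μ i) * Real.sqrt (μ j)) • P i else 0 := by
      intro j _
      rw [Matrix.mul_smul, hPP i j]
      by_cases hij : i = j
      · subst hij; simp [smul_smul]
      · simp [hij]
    rw [Matrix.smul_mul, Matrix.mul_sum, Finset.smul_sum, Finset.sum_congr rfl key,
      Finset.sum_ite_eq _ i (fun j => (Real.sqrt (μ i) * Real.sqrt (μ j)) • P i)]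
    simp [Real.mul_self_sqrt (hμ0 i)]
  have hMpsd : M.PosSemidef := hBB ▸ Matrix.posSemidef_conjTranspose_mul_self B
  have hMtr : M.trace = 1 := by
    rw [hMdef, Matrix.trace_sum]
    have e : ∀ i ∈ Finset.univ, (μ i • P i).trace = (μ i : ℂ) := fun i _ => by
      rw [Matrix.trace_smul, hPtr i, Complex.real_smul, mul_one]
    rw [Finset.sum_congr rfl e, ← Complex.ofReal_sum, hsumμ, Complex.ofReal_one]
  -- the eigenvalue differences
  set ν : Fin d → ℝ := fun i => lam i - μ i with hνdef
  have hν_le : ∀ i, ν i ≤ x₀ := by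
    intro i
    have : lam i - x₀ ≤ μ i := le_max_left _ _
    simp only [hνdef]; linarith
  have hνμ : ∀ i, ν i * μ i = x₀ * μ i := by
    intro i
    rcases le_or_gt (lam i) x₀ with h | h
    · have : μ i = 0 := max_eq_right (by linarith)
      rw [this]; ring
    · have : μ i = lam i - x₀ := max_eq_left (by linarith)
      simp only [hνdef, this]; ring
  have hXM : X - M = ∑ i, ν i • P i := by
    rw [hdecomp, hMdef, ← Finset.sum_sub_distrib]
    exact Finset.sum_congr rfl fun i _ => (sub_smul (lam i) (μ i) (P i)).symm
  -- completeness
  have hcomp : (∑ i, P i) = 1 := fpet_complete g horth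
  -- trace (P i * M) = μ i
  have hPM : ∀ i, Matrix.trace (P i * M) = (μ i : ℂ) := by
    intro i
    rw [hMdef, Matrix.mul_sum, Matrix.trace_sum]
    have e : ∀ j ∈ Finset.univ, (P i * μ j • P j).trace
        = if i = j then (μ i : ℂ) else 0 := by
      intro j _
      rw [Matrix.mul_smul, Matrix.trace_smul, hPP i j]
      by_cases hij : i = j
      · subst hij; rw [if_pos rfl, if_pos rfl, hPtr, Complex.real_smul, mul_one]
      · rw [if_neg hij, if_neg hij, Matrix.trace_zero, smul_zero]
    rw [Finset.sum_congr rfl e, Finset.sum_ite_eq _ i fun _ => (μ i : ℂ)]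
    simp
  -- main per-τ estimate
  refine ⟨x₀, M, rfl, hsumμ, ⟨hMpsd, hMtr⟩, ?_⟩
  intro τ hτ
  set t : Fin d → ℝ := fun i => (Matrix.trace (P i * τ)).re with htdef
  have htP : ∀ i, Matrix.trace (P i * τ) = dotProduct (star (g i)) (τ *ᵥ (g i)) := by
    intro i
    simp only [hPdef, Matrix.trace, Matrix.diag, Matrix.mul_apply, Matrix.vecMulVec_apply,
      dotProduct, Matrix.mulVec, Pi.star_apply, Finset.mul_sum]
    rw [Finset.sum_comm]
    exact Finset.sum_congr rfl fun c _ => Finset.sum_congr rfl fun e _ => by ring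
  have ht0 : ∀ i, 0 ≤ t i := by
    intro i
    have := hτ.1.dotProduct_mulVec_nonneg (g i)
    rw [htdef]
    simp only
    rw [htP i]
    exact (Complex.le_def.mp this).1
  have hsumt : ∑ i, t i = 1 := by
    have e : ∑ i, Matrix.trace (P i * τ) = 1 := by
      rw [← Matrix.trace_sum, ← Finset.sum_mul, hcomp, Matrix.one_mul, hτ.2]
    have := congrArg Complex.re e
    rw [Complex.re_sum] at this
    simpa [htdef] using this
  -- the inner product term
  have hinner : (Matrix.trace ((X - M)ᴴ * (M - τ))).re = ∑ i, ν i * (μ i - t i) := by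
    have hherm : (X - M)ᴴ = X - M := by
      rw [Matrix.conjTranspose_sub, hX.eq, hMherm]
    rw [hherm, hXM, Finset.sum_mul]
    rw [Matrix.trace_sum, Complex.re_sum]
    refine Finset.sum_congr rfl fun i _ => ?_
    rw [Matrix.smul_mul, Matrix.trace_smul, Matrix.mul_sub, Matrix.trace_sub, hPM]
    rw [Complex.real_smul]
    simp [Complex.mul_re, htdef]
  have hS : 0 ≤ ∑ i, ν i * (μ i - t i) := by
    have e1 : ∑ i, ν i * μ i = x₀ := by
      rw [Finset.sum_congr rfl fun i _ => hνμ i, ← Finset.mul_sum, hsumμ, mul_one]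
    have e2 : ∑ i, ν i * t i ≤ x₀ := by
      calc ∑ i, ν i * t i ≤ ∑ i, x₀ * t i :=
            Finset.sum_le_sum fun i _ => mul_le_mul_of_nonneg_right (hν_le i) (ht0 i)
        _ = x₀ := by rw [← Finset.mul_sum, hsumt, mul_one]
    have : ∑ i, ν i * (μ i - t i) = (∑ i, ν i * μ i) - ∑ i, ν i * t i := by
      rw [← Finset.sum_sub_distrib]
      exact Finset.sum_congr rfl fun i _ => by ring
    rw [this, e1]
    linarith
  have hkey : frobSq (X - M) + frobSq (M - τ) ≤ frobSq (X - τ) := by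
    have e : X - τ = (X - M) + (M - τ) := by abel
    rw [e, fpet_expand, hinner]
    linarith
  have hfrobsq : ∀ A : Matrix (Fin d) (Fin d) ℂ, frobNorm A = Real.sqrt (frobSq A) :=
    fun A => rfl
  constructor
  · rw [hfrobsq, hfrobsq]
    exact Real.sqrt_le_sqrt (by linarith [fpet_frobSq_nonneg (M - τ)])
  · intro hle
    have h1 : frobSq (X - τ) ≤ frobSq (X - M) := by
      have := Real.sqrt_le_sqrt (le_of_eq (hfrobsq (X - τ)).symm) -- dummy
      have e1 : frobSq (X - τ) = frobNorm (X - τ) ^ 2 := by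
        rw [hfrobsq, Real.sq_sqrt (fpet_frobSq_nonneg _)]
      have e2 : frobSq (X - M) = frobNorm (X - M) ^ 2 := by
        rw [hfrobsq, Real.sq_sqrt (fpet_frobSq_nonneg _)]
      rw [e1, e2]
      exact pow_le_pow_left₀ (Real.sqrt_nonneg _) hle 2
    have h2 : frobSq (M - τ) = 0 :=
      le_antisymm (by linarith) (fpet_frobSq_nonneg _)
    have h3 : M - τ = 0 := fpet_frobSq_eq_zero _ h2
    have := sub_eq_zero.mp h3
    exact this.symm
end

section
/- For every d ≥ 1 and every d×d complex matrix ρ (in particular every density matrix), the measure-and-prepare channel of the covariant measurement satisfies d·∫_{U(d)} Tr(ρ · U E₁₁ U*) · U E₁₁ U* dU = (ρ + Tr(ρ)·I)/(d+1); in particular, for a density matrix ρ this equals (ρ + I)/(d+1). -/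
open MeasureTheory ProbabilityTheory Matrix
open scoped ComplexOrder ComplexConjugate
set_option linter.unusedSectionVars false

namespace CovAux
variable {d : ℕ}
abbrev UG (d : ℕ) := Matrix.unitaryGroup (Fin d) ℂ

def ent (a b : Fin d) (U : UG d) : ℂ := (U : Matrix (Fin d) (Fin d) ℂ) a b

lemma measurable_ent (a b : Fin d) : Measurable (ent a b) := by
  have : ent a b = (fun M : Matrix (Fin d) (Fin d) ℂ => M a b) ∘ (Subtype.val) := rfl
  rw [this]
  exact ((measurable_pi_apply b).comp (measurable_pi_apply a)).comp measurable_subtype_coe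

lemma sum_normSq (b : Fin d) (U : UG d) :
    ∑ k, (Complex.normSq (ent k b U) : ℂ) = 1 := by
  have h := Matrix.UnitaryGroup.star_mul_self U
  have h2 := congrArg (fun M : Matrix (Fin d) (Fin d) ℂ => M b b) h
  simp only [Matrix.mul_apply, Matrix.one_apply_eq, Matrix.star_apply] at h2
  rw [← h2]
  refine Finset.sum_congr rfl fun k _ => ?_
  rw [Complex.normSq_eq_conj_mul_self]
  rfl

lemma sum_mul_conj (b : Fin d) (U : UG d) :
    ∑ k, ent k b U * conj (ent k b U) = 1 := by
  rw [← sum_normSq b U]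
  exact Finset.sum_congr rfl fun k _ => Complex.mul_conj _

lemma norm_ent_le (a b : Fin d) (U : UG d) : ‖ent a b U‖ ≤ 1 := by
  have h := sum_normSq b U
  have h' : ∑ k, Complex.normSq (ent k b U) = 1 := by
    have := congrArg Complex.re h
    simpa using this
  have hle : Complex.normSq (ent a b U) ≤ 1 := by
    rw [← h']
    exact Finset.single_le_sum (f := fun k => Complex.normSq (ent k b U))
      (fun k _ => Complex.normSq_nonneg _) (Finset.mem_univ a)
  rw [← Real.sqrt_one, Complex.norm_def]
  exact Real.sqrt_le_sqrt hle

/-- The fourth-moment integrand. -/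
def f (z j i a b : Fin d) (U : UG d) : ℂ :=
  ent j z U * conj (ent i z U) * (ent a z U * conj (ent b z U))

lemma measurable_conj_ent (a b : Fin d) : Measurable (fun U => conj (ent a b U)) :=
  Complex.continuous_conj.measurable.comp (measurable_ent a b)

lemma measurable_f (z j i a b : Fin d) : Measurable (f z j i a b) :=
  (((measurable_ent j z).mul (measurable_conj_ent i z)).mul
    ((measurable_ent a z).mul (measurable_conj_ent b z)))

lemma norm_f_le (z j i a b : Fin d) (U : UG d) : ‖f z j i a b U‖ ≤ 1 := by
  have h1 := norm_ent_le j z U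
  have h2 := norm_ent_le i z U
  have h3 := norm_ent_le a z U
  have h4 := norm_ent_le b z U
  have n1 : (0:ℝ) ≤ ‖ent j z U‖ := norm_nonneg _
  have n3 : (0:ℝ) ≤ ‖ent a z U‖ := norm_nonneg _
  calc ‖f z j i a b U‖
      = ‖ent j z U‖ * ‖ent i z U‖ * (‖ent a z U‖ * ‖ent b z U‖) := by
        simp [f, norm_mul]
    _ ≤ 1 * 1 * (1 * 1) := by gcongr
    _ = 1 := by norm_num

variable (μ : Measure (UG d)) [IsProbabilityMeasure μ]

lemma integrable_f (z j i a b : Fin d) : Integrable (f z j i a b) μ :=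
  (integrable_const (1:ℝ)).mono' (measurable_f z j i a b).aestronglyMeasurable
    (Filter.Eventually.of_forall fun U => norm_f_le z j i a b U)

/-- The fourth moments. -/
noncomputable def m (z j i a b : Fin d) : ℂ := ∫ U, f z j i a b U ∂μ

lemma measurable_mulV (V : UG d) : Measurable (fun U : UG d => V * U) := by
  apply Measurable.subtype_mk
  show Measurable fun U : UG d => ((V * U : UG d) : Matrix (Fin d) (Fin d) ℂ)
  have : (fun U : UG d => ((V * U : UG d) : Matrix (Fin d) (Fin d) ℂ))
      = fun U : UG d => (V : Matrix (Fin d) (Fin d) ℂ) * (U : Matrix (Fin d) (Fin d) ℂ) := rfl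
  rw [this]
  apply measurable_pi_lambda
  intro x
  apply measurable_pi_lambda
  intro y
  simp only [Matrix.mul_apply]
  exact Finset.measurable_sum _ fun k _ => ((measurable_ent k y).const_mul _)

omit [IsProbabilityMeasure μ] in
lemma integral_inv (hμ : ∀ V : UG d, μ.map (fun U => V * U) = μ) (V : UG d)
    (g : UG d → ℂ) (hg : Measurable g) :
    ∫ U, g (V * U) ∂μ = ∫ U, g U ∂μ := by
  conv_rhs => rw [← hμ V]
  rw [integral_map (measurable_mulV V).aemeasurable]
  rw [hμ V]
  exact hg.aestronglyMeasurable

lemma m_inv (hμ : ∀ V : UG d, μ.map (fun U => V * U) = μ) (V : UG d) (z j i a b : Fin d) :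
    ∫ U, f z j i a b (V * U) ∂μ = m μ z j i a b :=
  integral_inv μ hμ V _ (measurable_f z j i a b)

/-! ### Diagonal (phase) invariance -/

lemma diag_mem (t : Fin d → ℂ) (ht : ∀ l, t l * conj (t l) = 1) :
    Matrix.diagonal t ∈ Matrix.unitaryGroup (Fin d) ℂ := by
  rw [Matrix.mem_unitaryGroup_iff]
  have h1 : star (Matrix.diagonal t) = Matrix.diagonal (fun l => conj (t l)) := by
    rw [Matrix.star_eq_conjTranspose, Matrix.diagonal_conjTranspose]
    rfl
  rw [h1, Matrix.diagonal_mul_diagonal]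
  have h2 : (fun i => t i * conj (t i)) = fun _ => (1:ℂ) := funext fun l => ht l
  rw [h2, Matrix.diagonal_one]

lemma m_phase (hμ : ∀ V : UG d, μ.map (fun U => V * U) = μ)
    (t : Fin d → ℂ) (ht : ∀ l, t l * conj (t l) = 1) (z j i a b : Fin d) :
    (t j * conj (t i) * (t a * conj (t b))) * m μ z j i a b = m μ z j i a b := by
  set V : UG d := ⟨Matrix.diagonal t, diag_mem t ht⟩ with hV
  have he : ∀ (p : Fin d) (U : UG d), ent p z (V * U) = t p * ent p z U := by
    intro p U
    show (Matrix.diagonal t * (U : Matrix (Fin d) (Fin d) ℂ)) p z = _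
    rw [Matrix.diagonal_mul]
    rfl
  have hfV : ∀ U, f z j i a b (V * U) =
      (t j * conj (t i) * (t a * conj (t b))) * f z j i a b U := by
    intro U
    simp only [f, he, _root_.map_mul]
    ring
  have h1 := m_inv μ hμ V z j i a b
  rw [show (fun U => f z j i a b (V * U)) = fun U =>
      (t j * conj (t i) * (t a * conj (t b))) * f z j i a b U from funext hfV] at h1
  rw [integral_const_mul] at h1
  exact h1

/-- The phase used to kill off-pattern moments. -/
noncomputable def ph (c l : Fin d) : ℂ := if l = c then Complex.I else 1

lemma ph_unit (c l : Fin d) : ph c l * conj (ph c l) = 1 := by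
  unfold ph
  by_cases h : l = c <;> simp [h, Complex.mul_conj]

lemma m_eq_zero (hμ : ∀ V : UG d, μ.map (fun U => V * U) = μ) (c z j i a b : Fin d)
    (h : ph c j * conj (ph c i) * (ph c a * conj (ph c b)) ≠ 1) :
    m μ z j i a b = 0 := by
  have h1 := m_phase μ hμ (ph c) (ph_unit c) z j i a b
  have h2 : (ph c j * conj (ph c i) * (ph c a * conj (ph c b)) - 1) * m μ z j i a b = 0 := by
    rw [sub_mul, one_mul, h1, sub_self]
  rcases mul_eq_zero.mp h2 with h3 | h3
  · exact absurd (sub_eq_zero.mp h3) h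
  · exact h3

/-! ### Permutation invariance -/

lemma perm_mem (σ : Equiv.Perm (Fin d)) : σ.permMatrix ℂ ∈ Matrix.unitaryGroup (Fin d) ℂ := by
  rw [Matrix.mem_unitaryGroup_iff]
  have hstar : star (σ.permMatrix ℂ) = (σ⁻¹).permMatrix ℂ := by
    ext i j
    simp only [Matrix.star_apply, Equiv.Perm.permMatrix, PEquiv.toMatrix_apply,
      Equiv.toPEquiv_apply, Option.mem_def, Option.some.injEq]
    by_cases h : i = σ j
    · subst h; simp
    · rw [if_neg (fun hh => h hh.symm), if_neg (fun hh => h (by rw [← hh]; simp)), star_zero]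
  rw [hstar]
  have h2 := (PEquiv.toMatrix_trans (σ.toPEquiv) ((σ⁻¹).toPEquiv) (α := ℂ)).symm
  rw [Equiv.Perm.permMatrix, Equiv.Perm.permMatrix, h2, ← Equiv.toPEquiv_trans]
  have h3 : σ.trans σ⁻¹ = Equiv.refl (Fin d) := Equiv.self_trans_symm σ
  rw [h3, Equiv.toPEquiv_refl, PEquiv.toMatrix_refl]

lemma m_perm (hμ : ∀ V : UG d, μ.map (fun U => V * U) = μ) (σ : Equiv.Perm (Fin d))
    (z j i a b : Fin d) :
    m μ z (σ j) (σ i) (σ a) (σ b) = m μ z j i a b := by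
  set V : UG d := ⟨σ.permMatrix ℂ, perm_mem σ⟩ with hV
  have he : ∀ (p : Fin d) (U : UG d), ent p z (V * U) = ent (σ p) z U := by
    intro p U
    show (σ.permMatrix ℂ * (U : Matrix (Fin d) (Fin d) ℂ)) p z = _
    rw [Equiv.Perm.permMatrix, PEquiv.toMatrix_toPEquiv_mul]
    rfl
  have hfV : ∀ U, f z j i a b (V * U) = f z (σ j) (σ i) (σ a) (σ b) U := by
    intro U
    simp only [f, he]
  have h1 := m_inv μ hμ V z j i a b
  rw [show (fun U => f z j i a b (V * U)) = f z (σ j) (σ i) (σ a) (σ b) from funext hfV] at h1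
  exact h1

lemma m_diag_same (hμ : ∀ V : UG d, μ.map (fun U => V * U) = μ) (z p j : Fin d) :
    m μ z j j j j = m μ z p p p p := by
  have h := m_perm μ hμ (Equiv.swap p j) z p p p p
  rwa [Equiv.swap_apply_left] at h

lemma m_diag_pair (hμ : ∀ V : UG d, μ.map (fun U => V * U) = μ) (z p q j a : Fin d)
    (hpq : p ≠ q) (hja : j ≠ a) :
    m μ z j j a a = m μ z p p q q := by
  set y := Equiv.swap p j a with hy
  have hpy : p ≠ y := by
    intro h
    apply hja
    have h2 : Equiv.swap p j a = p := by rw [← hy, ← h]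
    have h3 : Equiv.swap p j a = Equiv.swap p j j := by rw [h2, Equiv.swap_apply_right]
    exact ((Equiv.swap p j).injective h3).symm
  set σ : Equiv.Perm (Fin d) := (Equiv.swap q y).trans (Equiv.swap p j) with hσ
  have hσp : σ p = j := by
    rw [hσ]
    simp only [Equiv.trans_apply]
    rw [Equiv.swap_apply_of_ne_of_ne hpq hpy, Equiv.swap_apply_left]
  have hσq : σ q = a := by
    rw [hσ]
    simp only [Equiv.trans_apply]
    rw [Equiv.swap_apply_left, hy, Equiv.swap_apply_self]
  have h := m_perm μ hμ σ z p p q q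
  rwa [hσp, hσq] at h

/-- Swap of pattern inside the integrand. -/
lemma m_swap_mid (z j i : Fin d) : m μ z j i i j = m μ z j j i i := by
  unfold m
  congr 1
  funext U
  unfold f
  ring

/-! ### Normalization -/

lemma m_sum (z : Fin d) : ∑ j, ∑ a, m μ z j j a a = 1 := by
  have hint : ∀ j : Fin d, Integrable (fun U => ∑ a, f z j j a a U) μ :=
    fun j => integrable_finset_sum _ fun a _ => integrable_f μ z j j a a
  have h1 : ∀ j : Fin d, ∑ a, m μ z j j a a = ∫ U, ∑ a, f z j j a a U ∂μ :=
    fun j => (integral_finset_sum _ fun a _ => integrable_f μ z j j a a).symm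
  calc ∑ j, ∑ a, m μ z j j a a = ∑ j, ∫ U, ∑ a, f z j j a a U ∂μ :=
        Finset.sum_congr rfl fun j _ => h1 j
    _ = ∫ U, ∑ j, ∑ a, f z j j a a U ∂μ :=
        (integral_finset_sum _ fun j _ => hint j).symm
    _ = ∫ (_ : UG d), (1:ℂ) ∂μ := by
        congr 1
        funext U
        have := sum_mul_conj z U
        calc ∑ j, ∑ a, f z j j a a U
            = (∑ j, ent j z U * conj (ent j z U)) * (∑ a, ent a z U * conj (ent a z U)) := by
              rw [Finset.sum_mul_sum]
              rfl
          _ = 1 := by rw [this, one_mul]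
    _ = 1 := by simp

/-! ### Hadamard rotation -/

lemma star_stdBasis (i j : Fin d) :
    star (Matrix.single i j (1:ℂ)) = Matrix.single j i 1 := by
  ext x y
  simp only [Matrix.star_apply, Matrix.single, Matrix.of_apply]
  by_cases h1 : i = y <;> by_cases h2 : j = x <;> simp [h1, h2]

noncomputable def rr : ℂ := ((Real.sqrt 2 : ℝ) : ℂ)⁻¹

lemma rr_conj : conj rr = rr := by
  unfold rr
  rw [← Complex.ofReal_inv, Complex.conj_ofReal]

lemma rr_sq : rr * rr = (2:ℂ)⁻¹ := by
  unfold rr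
  rw [← mul_inv, ← Complex.ofReal_mul, Real.mul_self_sqrt (by norm_num)]
  norm_num

noncomputable def hadA (p q : Fin d) : Matrix (Fin d) (Fin d) ℂ :=
  Matrix.single p p 1 + Matrix.single p q 1 +
    Matrix.single q p 1 - Matrix.single q q 1

noncomputable def hadB (p q : Fin d) : Matrix (Fin d) (Fin d) ℂ :=
  1 - Matrix.single p p 1 - Matrix.single q q 1

noncomputable def had (p q : Fin d) : Matrix (Fin d) (Fin d) ℂ :=
  rr • hadA p q + hadB p q

lemma hadA_mul_hadA (p q : Fin d) (hpq : p ≠ q) :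
    hadA p q * hadA p q = (2:ℂ) • (Matrix.single p p 1 + Matrix.single q q 1) := by
  unfold hadA
  have h1 : ∀ (i l : Fin d) (c e : ℂ), Matrix.single i p c * Matrix.single q l e = 0 :=
    fun i l c e => Matrix.single_mul_single_of_ne c i p q hpq e
  have h2 : ∀ (i l : Fin d) (c e : ℂ), Matrix.single i q c * Matrix.single p l e = 0 :=
    fun i l c e => Matrix.single_mul_single_of_ne c i q p hpq.symm e
  simp only [add_mul, mul_add, sub_mul, mul_sub, Matrix.single_mul_single_same, h1, h2, mul_one]
  module

lemma hadA_mul_hadB (p q : Fin d) (hpq : p ≠ q) :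
    hadA p q * hadB p q = 0 := by
  unfold hadA hadB
  have h1 : ∀ (i l : Fin d) (c e : ℂ), Matrix.single i p c * Matrix.single q l e = 0 :=
    fun i l c e => Matrix.single_mul_single_of_ne c i p q hpq e
  have h2 : ∀ (i l : Fin d) (c e : ℂ), Matrix.single i q c * Matrix.single p l e = 0 :=
    fun i l c e => Matrix.single_mul_single_of_ne c i q p hpq.symm e
  simp only [add_mul, mul_add, sub_mul, mul_sub, mul_one, Matrix.single_mul_single_same, h1, h2]
  module

lemma hadB_mul_hadA (p q : Fin d) (hpq : p ≠ q) :
    hadB p q * hadA p q = 0 := by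
  unfold hadA hadB
  have h1 : ∀ (i l : Fin d) (c e : ℂ), Matrix.single i p c * Matrix.single q l e = 0 :=
    fun i l c e => Matrix.single_mul_single_of_ne c i p q hpq e
  have h2 : ∀ (i l : Fin d) (c e : ℂ), Matrix.single i q c * Matrix.single p l e = 0 :=
    fun i l c e => Matrix.single_mul_single_of_ne c i q p hpq.symm e
  simp only [add_mul, mul_add, sub_mul, mul_sub, mul_one, one_mul, Matrix.single_mul_single_same, h1, h2]
  module

lemma hadB_mul_hadB (p q : Fin d) (hpq : p ≠ q) :
    hadB p q * hadB p q = hadB p q := by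
  unfold hadB
  have h1 : ∀ (i l : Fin d) (c e : ℂ), Matrix.single i p c * Matrix.single q l e = 0 :=
    fun i l c e => Matrix.single_mul_single_of_ne c i p q hpq e
  have h2 : ∀ (i l : Fin d) (c e : ℂ), Matrix.single i q c * Matrix.single p l e = 0 :=
    fun i l c e => Matrix.single_mul_single_of_ne c i q p hpq.symm e
  simp only [sub_mul, mul_sub, mul_one, one_mul, Matrix.single_mul_single_same, h1, h2]
  module

lemma had_mul_had (p q : Fin d) (hpq : p ≠ q) : had p q * had p q = 1 := by
  unfold had
  rw [add_mul, mul_add, mul_add, Matrix.smul_mul, Matrix.mul_smul, Matrix.smul_mul,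
    Matrix.mul_smul, hadA_mul_hadA p q hpq, hadA_mul_hadB p q hpq, hadB_mul_hadA p q hpq,
    hadB_mul_hadB p q hpq, smul_smul, smul_smul, rr_sq]
  rw [show (2:ℂ)⁻¹ * 2 = 1 by norm_num, one_smul, smul_zero]
  simp only [add_zero, zero_add]
  unfold hadB
  abel

lemma had_star (p q : Fin d) : star (had p q) = had p q := by
  unfold had hadA hadB
  have h1 : star rr = rr := rr_conj
  simp only [star_add, star_sub, star_smul, star_one, star_stdBasis, h1]
  abel_nf

lemma had_mem (p q : Fin d) (hpq : p ≠ q) : had p q ∈ Matrix.unitaryGroup (Fin d) ℂ := by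
  rw [Matrix.mem_unitaryGroup_iff, had_star, had_mul_had p q hpq]


lemma ent_had_p (p q z : Fin d) (hpq : p ≠ q) (U : UG d) :
    ent p z (⟨had p q, had_mem p q hpq⟩ * U) = rr * (ent p z U + ent q z U) := by
  show ((had p q) * (U : Matrix (Fin d) (Fin d) ℂ)) p z = _
  unfold had hadA hadB
  rw [Matrix.add_mul, Matrix.smul_mul]
  have hz : ∀ (jj : Fin d) (c : ℂ) (b : Fin d) (M : Matrix (Fin d) (Fin d) ℂ),
      (Matrix.single q jj c * M) p b = 0 :=
    fun jj c b M => Matrix.single_mul_apply_of_ne c q jj p b hpq M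
  simp only [Matrix.add_apply, Matrix.smul_apply, Matrix.sub_apply, Matrix.add_mul,
    Matrix.sub_mul, Matrix.one_mul,
    Matrix.single_mul_apply_same, one_mul, hz]
  unfold ent
  simp only [smul_eq_mul]
  ring

lemma ent_had_q (p q z : Fin d) (hpq : p ≠ q) (U : UG d) :
    ent q z (⟨had p q, had_mem p q hpq⟩ * U) = rr * (ent p z U - ent q z U) := by
  show ((had p q) * (U : Matrix (Fin d) (Fin d) ℂ)) q z = _
  unfold had hadA hadB
  rw [Matrix.add_mul, Matrix.smul_mul]
  have hz : ∀ (jj : Fin d) (c : ℂ) (b : Fin d) (M : Matrix (Fin d) (Fin d) ℂ),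
      (Matrix.single p jj c * M) q b = 0 :=
    fun jj c b M => Matrix.single_mul_apply_of_ne c p jj q b hpq.symm M
  simp only [Matrix.add_apply, Matrix.smul_apply, Matrix.sub_apply, Matrix.add_mul,
    Matrix.sub_mul, Matrix.one_mul,
    Matrix.single_mul_apply_same, one_mul, hz]
  unfold ent
  simp only [smul_eq_mul]
  ring

lemma m_had (hμ : ∀ V : UG d, μ.map (fun U => V * U) = μ) (z p q : Fin d) (hpq : p ≠ q) :
    m μ z p p q q = (4:ℂ)⁻¹ *
      (m μ z p p p p - m μ z p q p q - m μ z q p q p + m μ z q q q q) := by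
  set V : UG d := ⟨had p q, had_mem p q hpq⟩ with hV
  have key : ∀ U, f z p p q q (V * U) = (4:ℂ)⁻¹ *
      (f z p p p p U - f z p q p q U - f z q p q p U + f z q q q q U) := by
    intro U
    have hp := ent_had_p p q z hpq U
    have hq := ent_had_q p q z hpq U
    rw [hV] at *
    simp only [f, hp, hq, _root_.map_mul, map_add, map_sub, rr_conj]
    have h4 : rr * rr * (rr * rr) = (4:ℂ)⁻¹ := by
      rw [rr_sq]; norm_num
    set x := ent p z U
    set y := ent q z U
    set cx := conj (ent p z U)
    set cy := conj (ent q z U)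
    linear_combination ((x + y) * (cx + cy) * ((x - y) * (cx - cy))) * h4
  have h1 := m_inv μ hμ V z p p q q
  rw [show (fun U => f z p p q q (V * U)) = fun U => (4:ℂ)⁻¹ *
      (f z p p p p U - f z p q p q U - f z q p q p U + f z q q q q U) from funext key] at h1
  have iA : Integrable (fun U => f z p p p p U) μ := integrable_f μ z p p p p
  have iB : Integrable (fun U => f z p q p q U) μ := integrable_f μ z p q p q
  have iC : Integrable (fun U => f z q p q p U) μ := integrable_f μ z q p q p
  have iD : Integrable (fun U => f z q q q q U) μ := integrable_f μ z q q q q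
  have i1 : Integrable (fun U => f z p p p p U - f z p q p q U) μ := iA.sub iB
  have i2 : Integrable (fun U => f z p p p p U - f z p q p q U - f z q p q p U) μ := i1.sub iC
  rw [integral_const_mul, integral_add i2 iD, integral_sub i1 iC, integral_sub iA iB] at h1
  exact h1.symm

noncomputable def c11v (d : ℕ) : ℂ := ((d:ℂ) * ((d:ℂ) + 1))⁻¹

lemma m_pqpq_zero (hμ : ∀ V : UG d, μ.map (fun U => V * U) = μ) (z p q : Fin d) (hpq : p ≠ q) :
    m μ z p q p q = 0 := by
  apply m_eq_zero μ hμ p z p q p q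
  simp only [ph, if_pos rfl, if_neg hpq.symm, _root_.map_one, mul_one, Complex.I_mul_I]
  intro h
  have := congrArg Complex.re h
  norm_num at this

lemma m_qpqp_zero (hμ : ∀ V : UG d, μ.map (fun U => V * U) = μ) (z p q : Fin d) (hpq : p ≠ q) :
    m μ z q p q p = 0 := by
  apply m_eq_zero μ hμ p z q p q p
  simp only [ph, if_pos rfl, if_neg hpq.symm, Complex.conj_I, one_mul]
  intro h
  have := congrArg Complex.re h
  simp at this
  norm_num [Complex.I_mul_I] at this

lemma m_offdiag_val (hμ : ∀ V : UG d, μ.map (fun U => V * U) = μ) (z j a : Fin d)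
    (hja : j ≠ a) : m μ z j j a a = c11v d := by
  obtain ⟨q, hq⟩ : ∃ q : Fin d, q ≠ z := by
    by_cases h : j = z
    · exact ⟨a, by rw [← h]; exact hja.symm⟩
    · exact ⟨j, h⟩
  have hzq : z ≠ q := hq.symm
  set c11 := m μ z z z q q with hc11
  have hc2 : m μ z z z z z = 2 * c11 := by
    have h := m_had μ hμ z z q hzq
    rw [m_pqpq_zero μ hμ z z q hzq, m_qpqp_zero μ hμ z z q hzq,
      m_diag_same μ hμ z z q] at h
    linear_combination -2 * h
  have hrow : ∀ jj : Fin d, ∑ aa, m μ z jj jj aa aa = ((d:ℂ) + 1) * c11 := by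
    intro jj
    have hterm : ∀ aa : Fin d, m μ z jj jj aa aa = c11 + (if aa = jj then c11 else 0) := by
      intro aa
      by_cases h : aa = jj
      · subst h
        rw [if_pos rfl, m_diag_same μ hμ z z aa, hc2]
        ring
      · rw [if_neg h, add_zero]
        exact m_diag_pair μ hμ z z q jj aa hzq (fun hh => h hh.symm)
    rw [Finset.sum_congr rfl (fun aa _ => hterm aa), Finset.sum_add_distrib,
      Finset.sum_const, Finset.sum_ite_eq' Finset.univ jj (fun _ => c11),
      if_pos (Finset.mem_univ jj), Finset.card_univ, Fintype.card_fin, nsmul_eq_mul]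
    ring
  have hsum := m_sum μ z
  rw [Finset.sum_congr rfl (fun jj _ => hrow jj), Finset.sum_const, Finset.card_univ,
    Fintype.card_fin, nsmul_eq_mul] at hsum
  have hd0 : (d:ℂ) ≠ 0 := by
    have hpos : 0 < d := z.pos
    exact Nat.cast_ne_zero.mpr hpos.ne'
  have hd1 : ((d:ℂ) + 1) ≠ 0 := by
    have he : ((d:ℂ) + 1) = ((d+1 : ℕ) : ℂ) := by push_cast; ring
    rw [he]
    exact Nat.cast_ne_zero.mpr (Nat.succ_ne_zero d)
  have hmain : m μ z j j a a = c11 := m_diag_pair μ hμ z z q j a hzq hja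
  rw [hmain, c11v]
  field_simp
  linear_combination hsum

lemma m_diag_val (hμ : ∀ V : UG d, μ.map (fun U => V * U) = μ) (z j : Fin d) :
    m μ z j j j j = 2 * c11v d := by
  by_cases hex : ∃ q : Fin d, q ≠ z
  · obtain ⟨q, hq⟩ := hex
    have hzq := hq.symm
    have h := m_had μ hμ z z q hzq
    rw [m_pqpq_zero μ hμ z z q hzq, m_qpqp_zero μ hμ z z q hzq,
      m_diag_same μ hμ z z q, m_offdiag_val μ hμ z z q hzq] at h
    rw [m_diag_same μ hμ z z j]
    linear_combination -2 * h
  · push_neg at hex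
    have hd1 : d = 1 := by
      have h1 : 0 < d := z.pos
      have h2 : d ≤ 1 := by
        have hcard := Fintype.card_le_one_iff.mpr (fun x y : Fin d => (hex x).trans (hex y).symm)
        simpa using hcard
      omega
    subst hd1
    have hval : m μ z j j j j = 1 := by
      unfold m
      have hf1 : ∀ U : UG 1, f z j j j j U = 1 := by
        intro U
        have h := sum_mul_conj z U
        rw [Fin.sum_univ_one] at h
        have hj0 : j = (0 : Fin 1) := Subsingleton.elim _ _
        unfold f
        rw [hj0, h, one_mul]
      rw [show (f z j j j j : UG 1 → ℂ) = fun _ => 1 from funext hf1]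
      simp
    rw [hval, c11v]
    norm_num


lemma m_zero1 (hμ : ∀ V : UG d, μ.map (fun U => V * U) = μ) (z l k a : Fin d) (hlk : l ≠ k) :
    m μ z l k a a = 0 := by
  apply m_eq_zero μ hμ l z l k a a
  simp only [ph, if_pos rfl, if_neg (Ne.symm hlk), _root_.map_one]
  by_cases h : a = l
  · rw [if_pos h]
    intro hh
    have := congrArg Complex.im hh
    simp [Complex.conj_I] at this
  · rw [if_neg h]
    intro hh
    have := congrArg Complex.im hh
    simp at this

lemma m_zero_k_ne_a (hμ : ∀ V : UG d, μ.map (fun U => V * U) = μ) (z l k a b : Fin d)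
    (hba : b ≠ a) (hka : k ≠ a) : m μ z l k a b = 0 := by
  apply m_eq_zero μ hμ a z l k a b
  simp only [ph, if_pos rfl, if_neg hka, if_neg hba, _root_.map_one]
  by_cases h : l = a
  · rw [if_pos h]
    intro hh
    have := congrArg Complex.re hh
    simp [Complex.I_mul_I] at this
    norm_num at this
  · rw [if_neg h]
    intro hh
    have := congrArg Complex.im hh
    simp at this

lemma m_zero_l_ne_b (hμ : ∀ V : UG d, μ.map (fun U => V * U) = μ) (z l a b : Fin d)
    (hba : b ≠ a) (hlb : l ≠ b) : m μ z l a a b = 0 := by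
  apply m_eq_zero μ hμ b z l a a b
  simp only [ph, if_pos rfl, if_neg hlb, if_neg (Ne.symm hba), _root_.map_one]
  intro hh
  have := congrArg Complex.im hh
  simp [Complex.conj_I] at this

end CovAux



/-- The measure-and-prepare channel of the covariant measurement:
`d·∫ Tr(ρ · U E₁₁ U*) · U E₁₁ U* dU = (ρ + Tr(ρ)·I)/(d+1)` (entrywise), and in particular
`(ρ + I)/(d+1)` when `ρ` is a density matrix. -/
theorem covariant_measure_and_prepare_channel
    (d : ℕ) (hd : 0 < d)
    (μ : Measure (Matrix.unitaryGroup (Fin d) ℂ)) [IsProbabilityMeasure μ]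
    (hμ : ∀ V : Matrix.unitaryGroup (Fin d) ℂ, μ.map (fun U => V * U) = μ)
    (ρ : Matrix (Fin d) (Fin d) ℂ) :
    (∀ a b : Fin d,
      (d : ℂ) * ∫ U, Matrix.trace (ρ * covProj d ⟨0, hd⟩ U) * covProj d ⟨0, hd⟩ U a b ∂μ
        = ((ρ + ρ.trace • (1 : Matrix (Fin d) (Fin d) ℂ)) a b) / ((d : ℂ) + 1)) ∧
    (IsDensityMatrix ρ → ∀ a b : Fin d,
      (d : ℂ) * ∫ U, Matrix.trace (ρ * covProj d ⟨0, hd⟩ U) * covProj d ⟨0, hd⟩ U a b ∂μ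
        = ((ρ + (1 : Matrix (Fin d) (Fin d) ℂ)) a b) / ((d : ℂ) + 1)) := by
  classical
  have hd0 : (d:ℂ) ≠ 0 := Nat.cast_ne_zero.mpr hd.ne'
  have hd1 : ((d:ℂ) + 1) ≠ 0 := by
    have he : ((d:ℂ) + 1) = ((d+1 : ℕ) : ℂ) := by push_cast; ring
    rw [he]; exact Nat.cast_ne_zero.mpr (Nat.succ_ne_zero d)
  have hDen : (d:ℂ) * CovAux.c11v d = ((d:ℂ) + 1)⁻¹ := by
    unfold CovAux.c11v
    rw [mul_inv, ← mul_assoc, mul_inv_cancel₀ hd0, one_mul]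
  set z : Fin d := ⟨0, hd⟩ with hz
  have hcov : ∀ (U : CovAux.UG d) (x y : Fin d), covProj d z U x y =
      CovAux.ent x z U * (starRingEnd ℂ) (CovAux.ent y z U) := by
    intro U x y
    unfold covProj
    rw [Matrix.mul_apply, Finset.sum_eq_single z]
    · rw [Matrix.mul_single_apply_same, mul_one]
      rfl
    · intro c _ hc
      rw [Matrix.mul_single_apply_of_ne 1 z z x c hc, zero_mul]
    · simp
  have key : ∀ a b : Fin d,
      (∫ U, Matrix.trace (ρ * covProj d z U) * covProj d z U a b ∂μ)
        = ∑ k, ∑ l, ρ k l * CovAux.m μ z l k a b := by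
    intro a b
    have hpt : ∀ U, Matrix.trace (ρ * covProj d z U) * covProj d z U a b
        = ∑ k, ∑ l, ρ k l * CovAux.f z l k a b U := by
      intro U
      have htr : Matrix.trace (ρ * covProj d z U)
          = ∑ x, ∑ l, ρ x l * (CovAux.ent l z U * (starRingEnd ℂ) (CovAux.ent x z U)) := by
        rw [Matrix.trace]
        refine Finset.sum_congr rfl fun x _ => ?_
        rw [Matrix.diag_apply, Matrix.mul_apply]
        refine Finset.sum_congr rfl fun l _ => ?_
        rw [hcov U l x]
      rw [htr, hcov U a b, Finset.sum_mul]
      refine Finset.sum_congr rfl fun k _ => ?_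
      rw [Finset.sum_mul]
      refine Finset.sum_congr rfl fun l _ => ?_
      unfold CovAux.f
      ring
    rw [show (fun U => Matrix.trace (ρ * covProj d z U) * covProj d z U a b)
        = fun U => ∑ k, ∑ l, ρ k l * CovAux.f z l k a b U from funext hpt]
    rw [integral_finset_sum _ (fun k _ => integrable_finset_sum _
      (fun l _ => ((CovAux.integrable_f μ z l k a b).const_mul (ρ k l))))]
    refine Finset.sum_congr rfl fun k _ => ?_
    rw [integral_finset_sum _ (fun l _ => (CovAux.integrable_f μ z l k a b).const_mul _)]
    refine Finset.sum_congr rfl fun l _ => ?_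
    exact integral_const_mul _ _
  have hmain : ∀ a b : Fin d,
      (d : ℂ) * ∫ U, Matrix.trace (ρ * covProj d z U) * covProj d z U a b ∂μ
        = ((ρ + ρ.trace • (1 : Matrix (Fin d) (Fin d) ℂ)) a b) / ((d : ℂ) + 1) := by
    intro a b
    rw [key a b]
    by_cases hab : b = a
    · subst hab
      have hin : ∀ k : Fin d, ∑ l, ρ k l * CovAux.m μ z l k b b
          = ρ k k * (CovAux.c11v d * (if k = b then 2 else 1)) := by
        intro k
        rw [Finset.sum_eq_single k]
        · by_cases hk : k = b
          · subst hk
            rw [CovAux.m_diag_val μ hμ z k, if_pos rfl]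
            ring
          · rw [CovAux.m_offdiag_val μ hμ z k b hk, if_neg hk]
            ring
        · intro l _ hlk
          rw [CovAux.m_zero1 μ hμ z l k b hlk, mul_zero]
        · intro habs
          exact absurd (Finset.mem_univ k) habs
      rw [Finset.sum_congr rfl fun k _ => hin k]
      have hsum2 : ∑ k, ρ k k * (CovAux.c11v d * (if k = b then 2 else 1))
          = CovAux.c11v d * (Matrix.trace ρ + ρ b b) := by
        have hterm : ∀ k : Fin d, ρ k k * (CovAux.c11v d * (if k = b then 2 else 1))
            = CovAux.c11v d * ρ k k + (if k = b then CovAux.c11v d * ρ k k else 0) := by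
          intro k
          by_cases hk : k = b
          · rw [if_pos hk, if_pos hk]; ring
          · rw [if_neg hk, if_neg hk]; ring
        rw [Finset.sum_congr rfl fun k _ => hterm k, Finset.sum_add_distrib,
          Finset.sum_ite_eq' Finset.univ b (fun k => CovAux.c11v d * ρ k k),
          if_pos (Finset.mem_univ b), Matrix.trace, ← Finset.mul_sum]
        simp only [Matrix.diag_apply]
        ring
      rw [hsum2, Matrix.add_apply, Matrix.smul_apply, Matrix.one_apply_eq, smul_eq_mul, mul_one]
      rw [show (d:ℂ) * (CovAux.c11v d * (Matrix.trace ρ + ρ b b))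
          = ((d:ℂ) * CovAux.c11v d) * (Matrix.trace ρ + ρ b b) by ring, hDen, div_eq_mul_inv]
      ring
    · have hin : ∀ k : Fin d, ∑ l, ρ k l * CovAux.m μ z l k a b
          = if k = a then ρ a b * CovAux.m μ z b a a b else 0 := by
        intro k
        by_cases hk : k = a
        · subst hk
          rw [if_pos rfl, Finset.sum_eq_single b]
          · intro l _ hlb
            rw [CovAux.m_zero_l_ne_b μ hμ z l k b hab hlb, mul_zero]
          · intro habs
            exact absurd (Finset.mem_univ b) habs
        · rw [if_neg hk, Finset.sum_eq_zero]
          intro l _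
          rw [CovAux.m_zero_k_ne_a μ hμ z l k a b hab hk, mul_zero]
      rw [Finset.sum_congr rfl fun k _ => hin k,
        Finset.sum_ite_eq' Finset.univ a (fun _ => ρ a b * CovAux.m μ z b a a b),
        if_pos (Finset.mem_univ a)]
      rw [CovAux.m_swap_mid μ z b a, CovAux.m_offdiag_val μ hμ z b a hab]
      rw [Matrix.add_apply, Matrix.smul_apply, Matrix.one_apply_ne (fun h => hab h.symm),
        smul_eq_mul, mul_zero, add_zero]
      rw [show (d:ℂ) * (ρ a b * CovAux.c11v d) = ((d:ℂ) * CovAux.c11v d) * ρ a b by ring,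
        hDen, div_eq_mul_inv]
      ring
  refine ⟨hmain, fun hρ a b => ?_⟩
  have h := hmain a b
  rw [hρ.2, one_smul] at h
  exact h
end

section
/- For every d ≥ 1 and all indices i, j, k, l ∈ {1,…,d}, the Haar integral of a degree-four monomial in the entries of the first column of a random unitary satisfies ∫_{U(d)} U_{j1} U_{k1} · conj(U_{i1}) · conj(U_{l1}) dU = (δ_{ji}δ_{kl} + δ_{jl}δ_{ki}) / (d(d+1)). -/
open MeasureTheory ProbabilityTheory Matrix
open scoped ComplexOrder ComplexConjugate

namespace HFM

variable {d : ℕ}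

noncomputable def xe (hd : 0 < d) (U : Matrix.unitaryGroup (Fin d) ℂ) (m : Fin d) : ℂ :=
  (U : Matrix (Fin d) (Fin d) ℂ) m ⟨0, hd⟩

lemma meas_coe : Measurable ((↑) : Matrix.unitaryGroup (Fin d) ℂ → Matrix (Fin d) (Fin d) ℂ) :=
  measurable_subtype_coe

lemma meas_xe (hd : 0 < d) (m : Fin d) : Measurable fun U => xe hd U m :=
  ((measurable_pi_apply _).comp ((measurable_pi_apply m).comp meas_coe))

lemma norm_xe_le (hd : 0 < d) (U : Matrix.unitaryGroup (Fin d) ℂ) (m : Fin d) :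
    ‖xe hd U m‖ ≤ 1 :=
  entry_norm_bound_of_unitary U.2 _ _

lemma meas_mulV (V : Matrix.unitaryGroup (Fin d) ℂ) :
    Measurable fun U : Matrix.unitaryGroup (Fin d) ℂ => V * U := by
  apply Measurable.subtype_mk
  show Measurable fun U : Matrix.unitaryGroup (Fin d) ℂ =>
    (V : Matrix (Fin d) (Fin d) ℂ) * (U : Matrix (Fin d) (Fin d) ℂ)
  apply measurable_pi_lambda
  intro a
  apply measurable_pi_lambda
  intro b
  simp only [Matrix.mul_apply]
  exact Finset.measurable_sum _ fun c _ =>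
    (((measurable_pi_apply b).comp ((measurable_pi_apply c).comp meas_coe)).const_mul _)

/-- the basic quartic integrand -/
noncomputable def qf (hd : 0 < d) (j k i l : Fin d) (U : Matrix.unitaryGroup (Fin d) ℂ) : ℂ :=
  xe hd U j * xe hd U k * conj (xe hd U i) * conj (xe hd U l)

lemma meas_qf (hd : 0 < d) (j k i l : Fin d) : Measurable (qf hd j k i l) :=
  ((((meas_xe hd j).mul (meas_xe hd k)).mul (Complex.continuous_conj.measurable.comp (meas_xe hd i))).mul
    (Complex.continuous_conj.measurable.comp (meas_xe hd l)))

lemma norm_qf_le (hd : 0 < d) (j k i l : Fin d) (U) : ‖qf hd j k i l U‖ ≤ 1 := by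
  unfold qf
  simp only [norm_mul, RCLike.norm_conj]
  have h1 := norm_xe_le hd U j
  have h2 := norm_xe_le hd U k
  have h3 := norm_xe_le hd U i
  have h4 := norm_xe_le hd U l
  exact mul_le_one₀ (mul_le_one₀ (mul_le_one₀ h1 (norm_nonneg _) h2) (norm_nonneg _) h3)
    (norm_nonneg _) h4

lemma integrable_qf (hd : 0 < d) (μ : Measure (Matrix.unitaryGroup (Fin d) ℂ))
    [IsProbabilityMeasure μ] (j k i l : Fin d) : Integrable (qf hd j k i l) μ := by
  refine Integrable.mono' (integrable_const 1) (meas_qf hd j k i l).aestronglyMeasurable ?_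
  exact Filter.Eventually.of_forall (norm_qf_le hd j k i l)

/-- T is the moment tensor -/
noncomputable def T (hd : 0 < d) (μ : Measure (Matrix.unitaryGroup (Fin d) ℂ))
    (j k i l : Fin d) : ℂ := ∫ U, qf hd j k i l U ∂μ

lemma change_of_var (hd : 0 < d) (μ : Measure (Matrix.unitaryGroup (Fin d) ℂ))
    (hμ : ∀ V : Matrix.unitaryGroup (Fin d) ℂ, μ.map (fun U => V * U) = μ)
    (V : Matrix.unitaryGroup (Fin d) ℂ) (j k i l : Fin d) :
    T hd μ j k i l = ∫ U, qf hd j k i l (V * U) ∂μ := by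
  have h := MeasureTheory.integral_map (μ := μ) (φ := fun U => V * U)
    (meas_mulV V).aemeasurable (f := qf hd j k i l)
    (by rw [hμ V]; exact (meas_qf hd j k i l).aestronglyMeasurable)
  rw [hμ V] at h
  exact h.symm ▸ rfl


noncomputable def ph (m : Fin d) : Matrix (Fin d) (Fin d) ℂ :=
  Matrix.diagonal (fun c => if c = m then Complex.I else 1)

lemma ph_mem (m : Fin d) : ph m ∈ Matrix.unitaryGroup (Fin d) ℂ := by
  rw [Matrix.mem_unitaryGroup_iff', Matrix.star_eq_conjTranspose, ph,
    Matrix.diagonal_conjTranspose, Matrix.diagonal_mul_diagonal]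
  ext a b
  by_cases hab : a = b
  · subst hab
    by_cases ham : a = m <;>
      simp [Matrix.diagonal_apply, Matrix.one_apply, ham, Complex.conj_I]
  · simp [Matrix.diagonal_apply, Matrix.one_apply, hab]

lemma xe_ph (hd : 0 < d) (m c : Fin d) (U : Matrix.unitaryGroup (Fin d) ℂ) :
    xe hd (⟨ph m, ph_mem m⟩ * U) c = (if c = m then Complex.I else 1) * xe hd U c := by
  show ((ph m) * (U : Matrix (Fin d) (Fin d) ℂ)) c ⟨0, hd⟩ = _
  rw [ph, Matrix.diagonal_mul]
  rfl

lemma phase_rel (hd : 0 < d) (μ : Measure (Matrix.unitaryGroup (Fin d) ℂ))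
    [IsProbabilityMeasure μ]
    (hμ : ∀ V : Matrix.unitaryGroup (Fin d) ℂ, μ.map (fun U => V * U) = μ)
    (m j k i l : Fin d) :
    T hd μ j k i l =
      ((if j = m then Complex.I else 1) * (if k = m then Complex.I else 1) *
       (if i = m then -Complex.I else 1) * (if l = m then -Complex.I else 1)) *
        T hd μ j k i l := by
  conv_lhs => rw [change_of_var hd μ hμ ⟨ph m, ph_mem m⟩ j k i l]
  rw [T, ← MeasureTheory.integral_const_mul]
  congr 1
  funext U
  simp only [qf, xe_ph, _root_.map_mul, apply_ite (starRingEnd ℂ), Complex.conj_I, _root_.map_one]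
  ring

lemma T_zero_of_phase (hd : 0 < d) (μ : Measure (Matrix.unitaryGroup (Fin d) ℂ))
    [IsProbabilityMeasure μ]
    (hμ : ∀ V : Matrix.unitaryGroup (Fin d) ℂ, μ.map (fun U => V * U) = μ)
    (m j k i l : Fin d)
    (hφ : ((if j = m then Complex.I else 1) * (if k = m then Complex.I else 1) *
       (if i = m then -Complex.I else 1) * (if l = m then -Complex.I else 1)) ≠ 1) :
    T hd μ j k i l = 0 := by
  by_contra hT
  exact hφ (mul_right_cancel₀ hT (by rw [one_mul, ← phase_rel hd μ hμ m j k i l]))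

lemma I_ne_one : Complex.I ≠ 1 := by
  intro h
  have := Complex.I_sq
  rw [h] at this
  norm_num at this

lemma T_vanish (hd : 0 < d) (μ : Measure (Matrix.unitaryGroup (Fin d) ℂ))
    [IsProbabilityMeasure μ]
    (hμ : ∀ V : Matrix.unitaryGroup (Fin d) ℂ, μ.map (fun U => V * U) = μ)
    (j k i l : Fin d) (h : ¬((j = i ∧ k = l) ∨ (j = l ∧ k = i))) :
    T hd μ j k i l = 0 := by
  by_cases hji : j = i
  · have hkl : ¬ k = l := fun h' => h (Or.inl ⟨hji, h'⟩)
    subst hji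
    have hlk : ¬ l = k := fun h' => hkl h'.symm
    apply T_zero_of_phase hd μ hμ k
    by_cases hjk : j = k <;>
      norm_num [hjk, hlk, Complex.ext_iff]
  · by_cases hjl : j = l
    · have hki : ¬ k = i := fun h' => h (Or.inr ⟨hjl, h'⟩)
      subst hjl
      have hik : ¬ i = k := fun h' => hki h'.symm
      apply T_zero_of_phase hd μ hμ k
      by_cases hjk : j = k <;>
        norm_num [hjk, hik, Complex.ext_iff]
    · have hij : ¬ i = j := fun h' => hji h'.symm
      have hlj : ¬ l = j := fun h' => hjl h'.symm
      apply T_zero_of_phase hd μ hμ j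
      by_cases hkj : k = j <;>
        norm_num [hkj, hij, hlj, Complex.ext_iff]

noncomputable def pm (σ : Equiv.Perm (Fin d)) : Matrix (Fin d) (Fin d) ℂ :=
  Matrix.of fun a b => if σ b = a then 1 else 0

lemma pm_mem (σ : Equiv.Perm (Fin d)) : pm σ ∈ Matrix.unitaryGroup (Fin d) ℂ := by
  rw [Matrix.mem_unitaryGroup_iff', Matrix.star_eq_conjTranspose]
  ext a b
  simp [pm, Matrix.mul_apply, Matrix.conjTranspose_apply, apply_ite (starRingEnd ℂ),
    Matrix.one_apply, Finset.sum_ite_eq, Finset.sum_ite_eq', eq_comm,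
    EmbeddingLike.apply_eq_iff_eq]

lemma xe_pm (hd : 0 < d) (σ : Equiv.Perm (Fin d)) (c : Fin d)
    (U : Matrix.unitaryGroup (Fin d) ℂ) :
    xe hd (⟨pm σ, pm_mem σ⟩ * U) c = xe hd U (σ.symm c) := by
  show ((pm σ) * (U : Matrix (Fin d) (Fin d) ℂ)) c ⟨0, hd⟩ = _
  rw [Matrix.mul_apply]
  simp [pm, Equiv.apply_eq_iff_eq_symm_apply, Finset.sum_ite_eq, Finset.sum_ite_eq']
  rfl

lemma perm_rel (hd : 0 < d) (μ : Measure (Matrix.unitaryGroup (Fin d) ℂ))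
    [IsProbabilityMeasure μ]
    (hμ : ∀ V : Matrix.unitaryGroup (Fin d) ℂ, μ.map (fun U => V * U) = μ)
    (σ : Equiv.Perm (Fin d)) (j k i l : Fin d) :
    T hd μ (σ j) (σ k) (σ i) (σ l) = T hd μ j k i l := by
  have raw : T hd μ (σ j) (σ k) (σ i) (σ l) =
      T hd μ (σ.symm (σ j)) (σ.symm (σ k)) (σ.symm (σ i)) (σ.symm (σ l)) := by
    rw [change_of_var hd μ hμ ⟨pm σ, pm_mem σ⟩ (σ j) (σ k) (σ i) (σ l)]
    unfold T qf
    simp only [xe_pm]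
  simpa using raw

lemma col_norm (hd : 0 < d) (U : Matrix.unitaryGroup (Fin d) ℂ) :
    (∑ m, xe hd U m * conj (xe hd U m)) = 1 := by
  have h := Unitary.coe_star_mul_self U
  have h2 := congrFun (congrFun h ⟨0, hd⟩) ⟨0, hd⟩
  rw [Matrix.mul_apply] at h2
  simp only [Matrix.star_eq_conjTranspose, Matrix.conjTranspose_apply, Matrix.one_apply_eq] at h2
  rw [← h2]
  apply Finset.sum_congr rfl
  intro m _
  rw [Complex.star_def]
  unfold xe
  ring

lemma sum_T_eq_one (hd : 0 < d) (μ : Measure (Matrix.unitaryGroup (Fin d) ℂ))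
    [IsProbabilityMeasure μ] :
    (∑ j, ∑ k, T hd μ j k j k) = 1 := by
  have key : ∀ U, (∑ j, ∑ k, qf hd j k j k U) = 1 := by
    intro U
    have : (∑ j, ∑ k, qf hd j k j k U) =
        (∑ j, xe hd U j * conj (xe hd U j)) * (∑ k, xe hd U k * conj (xe hd U k)) := by
      rw [Fintype.sum_mul_sum]
      apply Finset.sum_congr rfl
      intro j _
      apply Finset.sum_congr rfl
      intro k _
      unfold qf
      ring
    rw [this, col_norm hd U, one_mul]
  have h1 : (∑ j, ∑ k, T hd μ j k j k) = ∫ U, (∑ j, ∑ k, qf hd j k j k U) ∂μ := by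
    rw [MeasureTheory.integral_finset_sum _ (fun j _ =>
      integrable_finset_sum _ (fun k _ => integrable_qf hd μ j k j k))]
    apply Finset.sum_congr rfl
    intro j _
    rw [MeasureTheory.integral_finset_sum _ (fun k _ => integrable_qf hd μ j k j k)]
    rfl
  rw [h1]
  simp only [key]
  simp


noncomputable def hs : ℂ := ((Real.sqrt 2 : ℝ) : ℂ)⁻¹

lemma hs_conj : (starRingEnd ℂ) hs = hs := by
  rw [hs, map_inv₀, Complex.conj_ofReal]

lemma hs_star : star hs = hs := hs_conj

lemma hs_sq : hs * hs = 2⁻¹ := by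
  rw [hs, ← mul_inv, ← Complex.ofReal_mul, Real.mul_self_sqrt (by norm_num)]
  norm_num

noncomputable def hB (p q : Fin d) : Matrix (Fin d) (Fin d) ℂ :=
  Matrix.single p p 1 + Matrix.single p q 1 +
    Matrix.single q p 1 - Matrix.single q q 1

noncomputable def hD (p q : Fin d) : Matrix (Fin d) (Fin d) ℂ :=
  Matrix.diagonal (fun c => if c = p ∨ c = q then 0 else 1)

noncomputable def hH (p q : Fin d) : Matrix (Fin d) (Fin d) ℂ :=
  hs • hB p q + hD p q

lemma hB_conjT (p q : Fin d) : (hB p q)ᴴ = hB p q := by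
  unfold hB
  ext a b
  simp only [Matrix.conjTranspose_apply, Matrix.add_apply, Matrix.sub_apply, star_sub, star_add,
    Matrix.single, Matrix.of_apply, apply_ite (star : ℂ → ℂ), star_one, star_zero,
    and_comm]
  ring

lemma hD_conjT (p q : Fin d) : (hD p q)ᴴ = hD p q := by
  unfold hD
  rw [Matrix.diagonal_conjTranspose,
    show (star fun c : Fin d => if c = p ∨ c = q then (0:ℂ) else 1) =
      fun c => if c = p ∨ c = q then (0:ℂ) else 1 by
        funext c
        rw [Pi.star_apply]
        by_cases h : c = p ∨ c = q <;> simp [h]]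

lemma hB_mul_hD (p q : Fin d) : hB p q * hD p q = 0 := by
  unfold hB hD
  ext a b
  simp only [Matrix.sub_mul, Matrix.add_mul, Matrix.mul_diagonal, Matrix.sub_apply,
    Matrix.add_apply, Matrix.zero_apply, Matrix.single, Matrix.of_apply]
  by_cases hbp : p = b <;> by_cases hbq : q = b <;> simp_all [eq_comm]

lemma hD_mul_hB (p q : Fin d) : hD p q * hB p q = 0 := by
  unfold hB hD
  ext a b
  simp only [Matrix.mul_sub, Matrix.mul_add, Matrix.diagonal_mul, Matrix.sub_apply,
    Matrix.add_apply, Matrix.zero_apply, Matrix.single, Matrix.of_apply]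
  by_cases hap : p = a <;> by_cases haq : q = a <;> simp_all [eq_comm]

lemma hD_mul_hD (p q : Fin d) : hD p q * hD p q = hD p q := by
  unfold hD
  rw [Matrix.diagonal_mul_diagonal]
  ext a b
  by_cases hab : a = b
  · subst hab
    by_cases h : a = p ∨ a = q <;> simp [Matrix.diagonal_apply, h]
  · simp [Matrix.diagonal_apply, hab]

lemma hB_mul_hB (p q : Fin d) (hpq : p ≠ q) :
    hB p q * hB p q = (2 : ℂ) • (Matrix.single p p 1 + Matrix.single q q 1) := by
  unfold hB
  have z1 : ∀ a b : Fin d, Matrix.single a p (1:ℂ) * Matrix.single q b 1 = 0 :=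
    fun a b => Matrix.single_mul_single_of_ne 1 a p q hpq 1
  have z2 : ∀ a b : Fin d, Matrix.single a q (1:ℂ) * Matrix.single p b 1 = 0 :=
    fun a b => Matrix.single_mul_single_of_ne 1 a q p hpq.symm 1
  simp only [Matrix.add_mul, Matrix.sub_mul, Matrix.mul_add, Matrix.mul_sub,
    Matrix.single_mul_single_same, z1, z2, mul_one]
  ext a b
  simp only [Matrix.sub_apply, Matrix.add_apply, Matrix.smul_apply, Matrix.zero_apply,
    smul_eq_mul]
  ring

lemma epq_diag_one (p q : Fin d) (hpq : p ≠ q) :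
    Matrix.single p p (1:ℂ) + Matrix.single q q 1 + hD p q = 1 := by
  unfold hD
  ext a b
  by_cases hab : a = b
  · subst hab
    by_cases hap : p = a <;> by_cases haq : q = a <;>
      simp_all [Matrix.add_apply, Matrix.single, Matrix.one_apply,
        Matrix.diagonal_apply, eq_comm]
  · by_cases hap : p = a <;> by_cases haq : q = a <;>
      simp_all [Matrix.add_apply, Matrix.single, Matrix.one_apply,
        Matrix.diagonal_apply, eq_comm]

lemma hH_mem (p q : Fin d) (hpq : p ≠ q) : hH p q ∈ Matrix.unitaryGroup (Fin d) ℂ := by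
  rw [Matrix.mem_unitaryGroup_iff', Matrix.star_eq_conjTranspose]
  have hct : (hH p q)ᴴ = hH p q := by
    unfold hH
    rw [Matrix.conjTranspose_add, Matrix.conjTranspose_smul, hB_conjT, hD_conjT, hs_star]
  rw [hct]
  unfold hH
  simp only [Matrix.add_mul, Matrix.mul_add, Matrix.smul_mul, Matrix.mul_smul,
    hB_mul_hD, hD_mul_hB, hD_mul_hD, smul_zero, add_zero, zero_add,
    hB_mul_hB p q hpq, smul_smul, hs_sq]
  rw [show hs * (hs * 2) = 1 by rw [← mul_assoc, hs_sq]; norm_num]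
  rw [one_smul]
  exact epq_diag_one p q hpq

lemma xe_hH (hd : 0 < d) (p q : Fin d) (hpq : p ≠ q) (U : Matrix.unitaryGroup (Fin d) ℂ) :
    xe hd (⟨hH p q, hH_mem p q hpq⟩ * U) p = hs * (xe hd U p + xe hd U q) := by
  show ((hH p q) * (U : Matrix (Fin d) (Fin d) ℂ)) p ⟨0, hd⟩ = _
  unfold hH hB hD
  rw [Matrix.add_mul, Matrix.smul_mul]
  simp only [Matrix.add_apply, Matrix.smul_apply, Matrix.sub_apply, Matrix.add_mul,
    Matrix.sub_mul, Matrix.diagonal_mul,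
    Matrix.single_mul_apply_same,
    Matrix.single_mul_apply_of_ne (h := hpq), one_mul]
  simp [xe, smul_eq_mul]
  try ring

lemma T_comm1 (hd : 0 < d) (μ : Measure (Matrix.unitaryGroup (Fin d) ℂ)) (j k i l : Fin d) :
    T hd μ j k i l = T hd μ k j l i := by
  unfold T qf
  congr 1
  funext U
  ring

lemma T_comm2 (hd : 0 < d) (μ : Measure (Matrix.unitaryGroup (Fin d) ℂ)) (j k i l : Fin d) :
    T hd μ j k i l = T hd μ j k l i := by
  unfold T qf
  congr 1
  funext U
  ring

lemma a_eq_two_b (hd : 0 < d) (μ : Measure (Matrix.unitaryGroup (Fin d) ℂ))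
    [IsProbabilityMeasure μ]
    (hμ : ∀ V : Matrix.unitaryGroup (Fin d) ℂ, μ.map (fun U => V * U) = μ)
    (p q : Fin d) (hpq : p ≠ q) :
    T hd μ p p p p = 2 * T hd μ p q p q := by
  set V : Matrix.unitaryGroup (Fin d) ℂ := ⟨hH p q, hH_mem p q hpq⟩ with hVdef
  have key : ∀ U, qf hd p p p p (V * U) =
      (4:ℂ)⁻¹ * ∑ c1 ∈ ({p, q} : Finset (Fin d)), ∑ c2 ∈ ({p, q} : Finset (Fin d)),
        ∑ c3 ∈ ({p, q} : Finset (Fin d)), ∑ c4 ∈ ({p, q} : Finset (Fin d)),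
          qf hd c1 c2 c3 c4 U := by
    intro U
    simp only [Finset.sum_pair hpq]
    unfold qf
    rw [xe_hH hd p q hpq U, _root_.map_mul, _root_.map_add, hs_conj]
    rw [show (4:ℂ)⁻¹ = hs * hs * (hs * hs) from by rw [hs_sq]; norm_num]
    ring
  have expand : T hd μ p p p p =
      (4:ℂ)⁻¹ * ∑ c1 ∈ ({p, q} : Finset (Fin d)), ∑ c2 ∈ ({p, q} : Finset (Fin d)),
        ∑ c3 ∈ ({p, q} : Finset (Fin d)), ∑ c4 ∈ ({p, q} : Finset (Fin d)),
          T hd μ c1 c2 c3 c4 := by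
    rw [change_of_var hd μ hμ V p p p p]
    rw [MeasureTheory.integral_congr_ae (Filter.Eventually.of_forall key)]
    rw [MeasureTheory.integral_const_mul]
    congr 1
    rw [MeasureTheory.integral_finset_sum _ (fun c1 _ => integrable_finset_sum _
      (fun c2 _ => integrable_finset_sum _ (fun c3 _ => integrable_finset_sum _
        (fun c4 _ => integrable_qf hd μ c1 c2 c3 c4))))]
    refine Finset.sum_congr rfl fun c1 _ => ?_
    rw [MeasureTheory.integral_finset_sum _ (fun c2 _ => integrable_finset_sum _
      (fun c3 _ => integrable_finset_sum _ (fun c4 _ => integrable_qf hd μ c1 c2 c3 c4)))]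
    refine Finset.sum_congr rfl fun c2 _ => ?_
    rw [MeasureTheory.integral_finset_sum _ (fun c3 _ => integrable_finset_sum _
      (fun c4 _ => integrable_qf hd μ c1 c2 c3 c4))]
    refine Finset.sum_congr rfl fun c3 _ => ?_
    rw [MeasureTheory.integral_finset_sum _ (fun c4 _ => integrable_qf hd μ c1 c2 c3 c4)]
    rfl
  simp only [Finset.sum_pair hpq] at expand
  have v1 : T hd μ p p p q = 0 := T_vanish hd μ hμ _ _ _ _ (by simp [hpq, hpq.symm])
  have v2 : T hd μ p p q p = 0 := T_vanish hd μ hμ _ _ _ _ (by simp [hpq, hpq.symm])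
  have v3 : T hd μ p p q q = 0 := T_vanish hd μ hμ _ _ _ _ (by simp [hpq, hpq.symm])
  have v4 : T hd μ p q p p = 0 := T_vanish hd μ hμ _ _ _ _ (by simp [hpq, hpq.symm])
  have v5 : T hd μ p q q q = 0 := T_vanish hd μ hμ _ _ _ _ (by simp [hpq, hpq.symm])
  have v6 : T hd μ q p p p = 0 := T_vanish hd μ hμ _ _ _ _ (by simp [hpq, hpq.symm])
  have v7 : T hd μ q p q q = 0 := T_vanish hd μ hμ _ _ _ _ (by simp [hpq, hpq.symm])
  have v8 : T hd μ q q p p = 0 := T_vanish hd μ hμ _ _ _ _ (by simp [hpq, hpq.symm])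
  have v9 : T hd μ q q p q = 0 := T_vanish hd μ hμ _ _ _ _ (by simp [hpq, hpq.symm])
  have v10 : T hd μ q q q p = 0 := T_vanish hd μ hμ _ _ _ _ (by simp [hpq, hpq.symm])
  have e1 : T hd μ q q q q = T hd μ p p p p := by
    have := perm_rel hd μ hμ (Equiv.swap p q) q q q q
    rw [Equiv.swap_apply_right] at this
    exact this.symm
  have e2 : T hd μ p q q p = T hd μ p q p q := by
    unfold T qf
    congr 1
    funext U
    ring
  have e3 : T hd μ q p p q = T hd μ p q p q := by
    unfold T qf
    congr 1
    funext U
    ring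
  have e4 : T hd μ q p q p = T hd μ p q p q := by
    unfold T qf
    congr 1
    funext U
    ring
  rw [v1, v2, v3, v4, v5, v6, v7, v8, v9, v10, e1, e2, e3, e4] at expand
  linear_combination 2 * expand

lemma all_a (hd : 0 < d) (μ : Measure (Matrix.unitaryGroup (Fin d) ℂ))
    [IsProbabilityMeasure μ]
    (hμ : ∀ V : Matrix.unitaryGroup (Fin d) ℂ, μ.map (fun U => V * U) = μ)
    (m n : Fin d) : T hd μ m m m m = T hd μ n n n n := by
  have := perm_rel hd μ hμ (Equiv.swap m n) m m m m
  rw [Equiv.swap_apply_left] at this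
  exact this.symm

lemma all_b (hd : 0 < d) (μ : Measure (Matrix.unitaryGroup (Fin d) ℂ))
    [IsProbabilityMeasure μ]
    (hμ : ∀ V : Matrix.unitaryGroup (Fin d) ℂ, μ.map (fun U => V * U) = μ)
    (j k p q : Fin d) (hjk : j ≠ k) (hpq : p ≠ q) :
    T hd μ j k j k = T hd μ p q p q := by
  set τ1 := Equiv.swap j p with hτ1
  have hτ1k : τ1 k ≠ p := by
    intro h
    apply hjk
    have : k = τ1 p := by rw [← h, Equiv.swap_apply_self]
    rw [this, hτ1, Equiv.swap_apply_right]
  set σ := τ1.trans (Equiv.swap (τ1 k) q) with hσ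
  have hσj : σ j = p := by
    rw [hσ, Equiv.trans_apply, hτ1, Equiv.swap_apply_left,
      Equiv.swap_apply_of_ne_of_ne (Ne.symm hτ1k) hpq]
  have hσk : σ k = q := by
    rw [hσ, Equiv.trans_apply, Equiv.swap_apply_left]
  have := perm_rel hd μ hμ σ j k j k
  rw [hσj, hσk] at this
  exact this.symm

lemma main_solve (hd : 0 < d) (μ : Measure (Matrix.unitaryGroup (Fin d) ℂ))
    [IsProbabilityMeasure μ]
    (hμ : ∀ V : Matrix.unitaryGroup (Fin d) ℂ, μ.map (fun U => V * U) = μ)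
    (p q : Fin d) (hpq : p ≠ q) :
    T hd μ p q p q = 1 / ((d:ℂ) * ((d:ℂ) + 1)) ∧
      T hd μ p p p p = 2 / ((d:ℂ) * ((d:ℂ) + 1)) := by
  set B := T hd μ p q p q with hB
  set A := T hd μ p p p p with hA
  have hsum := sum_T_eq_one hd μ
  have hinner : ∀ j : Fin d, (∑ k, T hd μ j k j k) = A + ((d:ℂ) - 1) * B := by
    intro j
    have hterm : ∀ k, T hd μ j k j k = B + (if k = j then A - B else 0) := by
      intro k
      by_cases hkj : k = j
      · subst hkj
        rw [if_pos rfl, hA]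
        rw [all_a hd μ hμ k p]
        ring
      · rw [if_neg hkj, add_zero, hB]
        exact all_b hd μ hμ j k p q (fun h => hkj h.symm) hpq
    rw [Finset.sum_congr rfl (fun k _ => hterm k), Finset.sum_add_distrib, Finset.sum_const,
      Finset.sum_ite_eq' Finset.univ j (fun _ => A - B), if_pos (Finset.mem_univ j),
      Finset.card_univ, Fintype.card_fin, nsmul_eq_mul]
    ring
  rw [Finset.sum_congr rfl (fun j _ => hinner j), Finset.sum_const, Finset.card_univ,
    Fintype.card_fin, nsmul_eq_mul] at hsum
  have hab : A = 2 * B := a_eq_two_b hd μ hμ p q hpq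
  rw [hab] at hsum
  have hd0 : (d:ℂ) ≠ 0 := Nat.cast_ne_zero.2 hd.ne'
  have hd1 : (d:ℂ) + 1 ≠ 0 := by
    have : ((d+1:ℕ):ℂ) ≠ 0 := Nat.cast_ne_zero.2 (Nat.succ_ne_zero d)
    rwa [Nat.cast_add, Nat.cast_one] at this
  constructor
  · rw [eq_div_iff (mul_ne_zero hd0 hd1)]
    linear_combination hsum
  · rw [hab, eq_div_iff (mul_ne_zero hd0 hd1)]
    linear_combination 2 * hsum

lemma a_val (hd : 0 < d) (μ : Measure (Matrix.unitaryGroup (Fin d) ℂ))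
    [IsProbabilityMeasure μ]
    (hμ : ∀ V : Matrix.unitaryGroup (Fin d) ℂ, μ.map (fun U => V * U) = μ)
    (m : Fin d) : T hd μ m m m m = 2 / ((d:ℂ) * ((d:ℂ) + 1)) := by
  by_cases hd2 : 1 < d
  · have hpq : (⟨0, hd⟩ : Fin d) ≠ ⟨1, hd2⟩ := by simp [Fin.ext_iff]
    rw [all_a hd μ hμ m ⟨0, hd⟩]
    exact (main_solve hd μ hμ _ _ hpq).2
  · have hd1 : d = 1 := by omega
    subst hd1
    have hs := sum_T_eq_one hd μ
    have hm : m = ⟨0, hd⟩ := Subsingleton.elim m _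
    simp only [Finset.univ_unique, Finset.sum_singleton] at hs
    rw [hm]
    have : (default : Fin 1) = ⟨0, hd⟩ := Subsingleton.elim _ _
    rw [this] at hs
    rw [hs]
    norm_num

lemma b_val (hd : 0 < d) (μ : Measure (Matrix.unitaryGroup (Fin d) ℂ))
    [IsProbabilityMeasure μ]
    (hμ : ∀ V : Matrix.unitaryGroup (Fin d) ℂ, μ.map (fun U => V * U) = μ)
    (j k : Fin d) (hjk : j ≠ k) :
    T hd μ j k j k = 1 / ((d:ℂ) * ((d:ℂ) + 1)) := by
  have hd2 : 1 < d := by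
    by_contra hcon
    have hd1 : d = 1 := by omega
    subst hd1
    exact hjk (Subsingleton.elim j k)
  have hpq : (⟨0, hd⟩ : Fin d) ≠ ⟨1, hd2⟩ := by simp [Fin.ext_iff]
  rw [all_b hd μ hμ j k ⟨0, hd⟩ ⟨1, hd2⟩ hjk hpq]
  exact (main_solve hd μ hμ _ _ hpq).1

end HFM

/-- Degree-four Weingarten integral for the first column of a Haar unitary:
`∫ U_{j1} U_{k1} conj(U_{i1}) conj(U_{l1}) dU = (δ_{ji}δ_{kl} + δ_{jl}δ_{ki})/(d(d+1))`. -/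
theorem haar_first_column_fourth_moment
    (d : ℕ) (hd : 0 < d)
    (μ : Measure (Matrix.unitaryGroup (Fin d) ℂ)) [IsProbabilityMeasure μ]
    (hμ : ∀ V : Matrix.unitaryGroup (Fin d) ℂ, μ.map (fun U => V * U) = μ)
    (i j k l : Fin d) :
    (∫ U, (U : Matrix (Fin d) (Fin d) ℂ) j ⟨0, hd⟩ * (U : Matrix (Fin d) (Fin d) ℂ) k ⟨0, hd⟩ *
        (starRingEnd ℂ) ((U : Matrix (Fin d) (Fin d) ℂ) i ⟨0, hd⟩) *
        (starRingEnd ℂ) ((U : Matrix (Fin d) (Fin d) ℂ) l ⟨0, hd⟩) ∂μ)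
      = ((if j = i then 1 else 0) * (if k = l then 1 else 0) +
          (if j = l then 1 else 0) * (if k = i then 1 else 0)) / ((d : ℂ) * ((d : ℂ) + 1)) := by
  have hgoal : (∫ U, (U : Matrix (Fin d) (Fin d) ℂ) j ⟨0, hd⟩ *
      (U : Matrix (Fin d) (Fin d) ℂ) k ⟨0, hd⟩ *
      (starRingEnd ℂ) ((U : Matrix (Fin d) (Fin d) ℂ) i ⟨0, hd⟩) *
      (starRingEnd ℂ) ((U : Matrix (Fin d) (Fin d) ℂ) l ⟨0, hd⟩) ∂μ)
      = HFM.T hd μ j k i l := rfl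
  rw [hgoal]
  by_cases h1 : j = i ∧ k = l
  · obtain ⟨hji, hkl⟩ := h1
    subst hji
    subst hkl
    by_cases hjk : j = k
    · subst hjk
      rw [HFM.a_val hd μ hμ j]
      norm_num
    · rw [HFM.b_val hd μ hμ j k hjk]
      simp [hjk]
  · by_cases h2 : j = l ∧ k = i
    · obtain ⟨hjl, hki⟩ := h2
      subst hjl
      subst hki
      have hjk : j ≠ k := fun h => h1 ⟨h, h.symm⟩
      rw [HFM.T_comm2 hd μ j k k j, HFM.b_val hd μ hμ j k hjk]
      simp [hjk]
    · rw [HFM.T_vanish hd μ hμ j k i l (by tauto)]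
      have z1 : (if j = i then (1:ℂ) else 0) * (if k = l then 1 else 0) = 0 := by
        by_cases hji : j = i <;> by_cases hkl : k = l <;> simp_all
      have z2 : (if j = l then (1:ℂ) else 0) * (if k = i then 1 else 0) = 0 := by
        by_cases hjl : j = l <;> by_cases hki : k = i <;> simp_all
      rw [z1, z2]
      simp
end
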